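/- (The hub of a star attains the targeting upper bound.) Let n ≥ 2 and let G be the star graph on n vertices with hub h (the hub is adjacent to all other nodes, and each of the n−1 leaves is adjacent only to the hub). Fix β ≥ 0 and set ω_j = (1 + β λ_j)^{−2} and φ(i) = Σ_{j=1}^{n−1} (1 − ω_j) [q_j(i)]². Then: (a) the vector v = n·e_h − 1_n satisfies L v = n v, so λ_1 = n and the normalized eigenvector q_1 = v/‖v‖ satisfies [q_1(h)]² = 1 − 1/n; and (b) φ(h) = [1 − (1 + βn)^{−2}] · (1 − 1/n). -/

import Mathlib

open Matrix Finset

/-- The hub of a star attains the targeting upper bound: in the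
star on `n ≥ 2` vertices with hub `h`, the vector `v = n e_h − 1` satisfies
`L v = n v`, so `λ_1 = n` (`lam 0 = n` in 0-based indexing) and `q_1(h)² = 1 − 1/n`;
moreover `φ(h) = (1 − (1 + βn)^{−2})(1 − 1/n)`. -/
theorem star_hub_attains_bound
    (n : ℕ) (hn : 0 < n)
    (A : Matrix (Fin n) (Fin n) ℝ)
    (hA01 : ∀ i j, A i j = 0 ∨ A i j = 1)
    (hAsym : ∀ i j, A i j = A j i)
    (hAdiag : ∀ i, A i i = 0)
    (d : Fin n → ℝ) (hd : ∀ i, d i = ∑ j, A i j)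
    (L : Matrix (Fin n) (Fin n) ℝ) (hLdef : L = Matrix.diagonal d - A)
    (q : ℕ → Fin n → ℝ) (lam : ℕ → ℝ)
    (heig : ∀ s, s < n → L *ᵥ q s = lam s • q s)
    (horth : ∀ s, s < n → ∀ t, t < n → ∑ i, q s i * q t i = if s = t then 1 else 0)
    (hdesc : ∀ s t, s ≤ t → t < n → lam t ≤ lam s)
    (hlam0 : lam (n - 1) = 0)
    (hqlast : ∀ i, q (n - 1) i = 1 / Real.sqrt n)
    (hn2 : 2 ≤ n) (h : Fin n)
    (hstar1 : ∀ j : Fin n, j ≠ h → A h j = 1)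
    (hstar0 : ∀ i j : Fin n, i ≠ h → j ≠ h → A i j = 0)
    (β : ℝ) (hβ : 0 ≤ β) :
    (L *ᵥ (fun j => (n : ℝ) * (if j = h then 1 else 0) - 1)
        = (n : ℝ) • (fun j => (n : ℝ) * (if j = h then 1 else 0) - 1))
    ∧ lam 0 = n
    ∧ (q 0 h) ^ 2 = 1 - 1 / n
    ∧ ∑ j ∈ Finset.range (n - 1), (1 - 1 / (1 + β * lam j) ^ 2) * (q j h) ^ 2
        = (1 - 1 / (1 + β * n) ^ 2) * (1 - 1 / n) := by
  have hnR : (0:ℝ) < n := by exact_mod_cast hn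
  have hn1lt : (1:ℝ) < n := by exact_mod_cast hn2
  have hnne : (n:ℝ) ≠ 0 := ne_of_gt hnR
  have hn1ne : (n:ℝ) - 1 ≠ 0 := by linarith
  -- entries of A
  have hAh : ∀ j, A h j = if j = h then 0 else 1 := by
    intro j; by_cases hj : j = h
    · simp [hj, hAdiag]
    · simp [hj, hstar1 j hj]
  have hAi : ∀ i, i ≠ h → ∀ j, A i j = if j = h then 1 else 0 := by
    intro i hi j; by_cases hj : j = h
    · rw [hj, hAsym]; simp [hstar1 i hi]
    · simp [hj, hstar0 i j hi hj]
  -- degrees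
  have hdh : d h = (n:ℝ) - 1 := by
    have hstep : ∀ j : Fin n, A h j = 1 - (if j = h then (1:ℝ) else 0) := by
      intro j; rw [hAh]; by_cases hj : j = h <;> simp [hj]
    rw [hd, Finset.sum_congr rfl (fun j _ => hstep j), Finset.sum_sub_distrib,
      Finset.sum_ite_eq' Finset.univ h (fun _ => (1:ℝ))]
    simp
  have hdi : ∀ i, i ≠ h → d i = 1 := by
    intro i hi
    rw [hd, Finset.sum_congr rfl (fun j _ => hAi i hi j),
      Finset.sum_ite_eq' Finset.univ h (fun _ => (1:ℝ))]
    simp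
  -- action of A on a vector
  have hAmulh : ∀ w : Fin n → ℝ, ∑ j, A h j * w j = (∑ j, w j) - w h := by
    intro w
    have : ∀ j, A h j * w j = w j - (if j = h then w j else 0) := by
      intro j; rw [hAh]; by_cases hj : j = h <;> simp [hj]
    rw [Finset.sum_congr rfl (fun j _ => this j), Finset.sum_sub_distrib,
      Finset.sum_ite_eq' Finset.univ h w]
    simp
  have hAmuli : ∀ (w : Fin n → ℝ) i, i ≠ h → ∑ j, A i j * w j = w h := by
    intro w i hi
    have : ∀ j, A i j * w j = if j = h then w j else 0 := by
      intro j; rw [hAi i hi]; by_cases hj : j = h <;> simp [hj]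
    rw [Finset.sum_congr rfl (fun j _ => this j), Finset.sum_ite_eq' Finset.univ h w]
    simp
  -- action of L
  have hLapp : ∀ (w : Fin n → ℝ) i, (L *ᵥ w) i = d i * w i - ∑ j, A i j * w j := by
    intro w i
    rw [hLdef, Matrix.sub_mulVec, Pi.sub_apply, Matrix.mulVec_diagonal]
    rfl
  have hLh : ∀ w : Fin n → ℝ, (L *ᵥ w) h = (n:ℝ) * w h - ∑ j, w j := by
    intro w; rw [hLapp, hdh, hAmulh]; ring
  have hLi : ∀ (w : Fin n → ℝ) i, i ≠ h → (L *ᵥ w) i = w i - w h := by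
    intro w i hi; rw [hLapp, hdi i hi, hAmuli w i hi]; ring
  -- part (a)
  set v : Fin n → ℝ := fun j => (n : ℝ) * (if j = h then 1 else 0) - 1 with hv
  have hvsum : ∑ j, v j = 0 := by
    rw [hv]
    simp only [Finset.sum_sub_distrib]
    rw [← Finset.mul_sum, Finset.sum_ite_eq' Finset.univ h (fun _ => (1:ℝ))]
    simp
  have parta : L *ᵥ v = (n : ℝ) • v := by
    funext i
    by_cases hi : i = h
    · subst hi
      rw [hLh v, hvsum, hv]
      simp
    · rw [hLi v i hi, hv]
      simp [hi]
      ring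
  -- sum of each nonlast eigenvector is zero
  have hsqrt : Real.sqrt n ≠ 0 := by
    positivity
  have hsum0 : ∀ s, s < n - 1 → ∑ i, q s i = 0 := by
    intro s hs
    have h1 := horth s (by omega) (n-1) (by omega)
    rw [if_neg (by omega)] at h1
    have h2 : ∑ i, q s i * q (n-1) i = (∑ i, q s i) * (1 / Real.sqrt n) := by
      rw [Finset.sum_mul]
      exact Finset.sum_congr rfl (fun i _ => by rw [hqlast i])
    rw [h2] at h1
    rcases mul_eq_zero.mp h1 with h3 | h3
    · exact h3
    · exact absurd h3 (by simp [hsqrt])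
  -- hub and leaf eigen-equations
  have hub : ∀ s, s < n - 1 → (n:ℝ) * q s h = lam s * q s h := by
    intro s hs
    have := congrFun (heig s (by omega)) h
    rw [hLh (q s), hsum0 s hs] at this
    simpa using this
  have leaf : ∀ s, s < n → ∀ i, i ≠ h → q s i - q s h = lam s * q s i := by
    intro s hs i hi
    have := congrFun (heig s hs) i
    rw [hLi (q s) i hi] at this
    simpa using this
  -- row orthonormality
  have hrow : ∀ i j : Fin n, ∑ s : Fin n, q s i * q s j = if i = j then 1 else 0 := by
    have h1 : (Matrix.of fun (s i : Fin n) => q s i) * (Matrix.of fun (s i : Fin n) => q s i)ᵀ = 1 := by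
      ext s t
      simp only [Matrix.mul_apply, Matrix.transpose_apply, Matrix.of_apply, Matrix.one_apply]
      rw [horth s s.isLt t t.isLt]
      simp [Fin.val_eq_val]
    have h2 := mul_eq_one_comm.mp h1
    intro i j
    have := congrFun (congrFun h2 i) j
    simpa [Matrix.mul_apply, Matrix.transpose_apply, Matrix.one_apply] using this
  have hrowh : ∑ s ∈ Finset.range n, (q s h)^2 = 1 := by
    have := hrow h h
    rw [if_pos rfl] at this
    rw [← Fin.sum_univ_eq_sum_range (fun s => (q s h)^2) n]
    rw [← this]
    exact Finset.sum_congr rfl (fun s _ => (sq (q s h)).symm ▸ by ring)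
  have hqlast2 : (q (n-1) h)^2 = 1 / n := by
    rw [hqlast h, div_pow, one_pow, Real.sq_sqrt (le_of_lt hnR)]
  have hsumrest : ∑ s ∈ Finset.range (n-1), (q s h)^2 = 1 - 1/n := by
    have hsplit : ∑ s ∈ Finset.range n, (q s h)^2
        = ∑ s ∈ Finset.range (n-1), (q s h)^2 + (q (n-1) h)^2 := by
      have : n = (n-1) + 1 := by omega
      rw [this]
      simp [Finset.sum_range_succ]
    rw [hsplit, hqlast2] at hrowh
    linarith
  -- existence of an eigenvalue equal to n among the first n-1
  have hpos : (0:ℝ) < 1 - 1/n := by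
    have : 1/(n:ℝ) < 1 := by
      rw [div_lt_one hnR]; linarith
    linarith
  have hex : ∃ s, s < n - 1 ∧ q s h ≠ 0 := by
    by_contra hc
    push_neg at hc
    have : ∑ s ∈ Finset.range (n-1), (q s h)^2 = 0 := by
      apply Finset.sum_eq_zero
      intro s hs
      rw [hc s (Finset.mem_range.mp hs)]
      ring
    rw [this] at hsumrest
    linarith
  obtain ⟨s0, hs0, hqs0⟩ := hex
  have hlams0 : lam s0 = n := by
    have := hub s0 hs0
    exact (mul_right_cancel₀ hqs0 this).symm
  have hlam0ge : (n:ℝ) ≤ lam 0 := by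
    rw [← hlams0]
    exact hdesc 0 s0 (Nat.zero_le _) (by omega)
  -- lam 0 = n
  have hq00 : ∑ i, q 0 i * q 0 i = 1 := by
    have := horth 0 (by omega) 0 (by omega)
    rwa [if_pos rfl] at this
  have hq0ne : ∃ i, q 0 i ≠ 0 := by
    by_contra hc
    push_neg at hc
    rw [Finset.sum_eq_zero (fun i _ => by rw [hc i]; ring)] at hq00
    norm_num at hq00
  have hlam0n : lam 0 = n ∧ q 0 h ≠ 0 := by
    by_cases hq0h : q 0 h = 0
    · exfalso
      have hleaf : ∀ i, i ≠ h → (1 - lam 0) * q 0 i = 0 := by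
        intro i hi
        have := leaf 0 (by omega) i hi
        rw [hq0h] at this
        linarith [this]
      have hlam1 : lam 0 = 1 := by
        obtain ⟨i, hi⟩ := hq0ne
        have hih : i ≠ h := by
          intro he; rw [he, hq0h] at hi; exact hi rfl
        have := hleaf i hih
        rcases mul_eq_zero.mp this with h1 | h1
        · linarith
        · exact absurd h1 hi
      rw [hlam1] at hlam0ge
      linarith
    · constructor
      · have := hub 0 (by omega)
        exact (mul_right_cancel₀ hq0h this).symm
      · exact hq0h
  obtain ⟨hlam0n', hq0h⟩ := hlam0n
  -- part (c)
  have hq0i : ∀ i, i ≠ h → q 0 i = q 0 h / (1 - n) := by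
    intro i hi
    have := leaf 0 (by omega) i hi
    rw [hlam0n'] at this
    have h2 : (1 - (n:ℝ)) * q 0 i = q 0 h := by linarith
    have h1n : (1:ℝ) - n ≠ 0 := by intro hc; apply hn1ne; linarith
    rw [eq_div_iff h1n]
    linarith
  have partc : (q 0 h) ^ 2 = 1 - 1 / n := by
    have hterm : ∀ i, q 0 i * q 0 i
        = (q 0 h)^2 / (1-n)^2 + (if i = h then (q 0 h)^2 - (q 0 h)^2 / (1-n)^2 else 0) := by
      intro i
      by_cases hi : i = h
      · subst hi; simp; ring
      · rw [hq0i i hi, if_neg hi]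
        rw [div_mul_div_comm]
        ring_nf
    rw [Finset.sum_congr rfl (fun i _ => hterm i)] at hq00
    rw [Finset.sum_add_distrib, Finset.sum_const, Finset.sum_ite_eq' Finset.univ h] at hq00
    simp only [Finset.card_univ, Fintype.card_fin, Finset.mem_univ, if_true, nsmul_eq_mul] at hq00
    have h1n : ((1:ℝ) - n) ^ 2 ≠ 0 := by
      apply pow_ne_zero; intro hc; apply hn1ne; linarith
    set y := q 0 h ^ 2 / (1 - (n:ℝ)) ^ 2 with hy
    have hx : q 0 h ^ 2 = y * (1 - n) ^ 2 := by rw [hy, div_mul_cancel₀ _ h1n]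
    have hinv : (n:ℝ) * (n:ℝ)⁻¹ = 1 := mul_inv_cancel₀ hnne
    rw [hx] at hq00 ⊢
    linear_combination ((n:ℝ) - 1) / n * hq00 - (y * ((n:ℝ) - 1) ^ 2 - 1) * hinv
  -- middle eigenvector components vanish at h
  have hmid : ∀ j, 1 ≤ j → j < n - 1 → q j h = 0 := by
    intro j hj1 hj2
    have hsplit : ∑ s ∈ Finset.range (n-1), (q s h)^2
        = ∑ s ∈ Finset.range (n-2), (q (s+1) h)^2 + (q 0 h)^2 := by
      have : n - 1 = (n-2) + 1 := by omega
      rw [this, Finset.sum_range_succ']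
    have hzero : ∑ s ∈ Finset.range (n-2), (q (s+1) h)^2 = 0 := by
      rw [hsplit, partc] at hsumrest
      linarith
    have hall := (Finset.sum_eq_zero_iff_of_nonneg (fun s _ => sq_nonneg (q (s+1) h))).mp hzero
    have := hall (j-1) (Finset.mem_range.mpr (by omega))
    have hj : j - 1 + 1 = j := by omega
    rw [hj] at this
    exact pow_eq_zero_iff (by norm_num) |>.mp this
  -- part (d)
  have partd : ∑ j ∈ Finset.range (n - 1), (1 - 1 / (1 + β * lam j) ^ 2) * (q j h) ^ 2
      = (1 - 1 / (1 + β * n) ^ 2) * (1 - 1 / n) := by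
    have hsplit : ∑ j ∈ Finset.range (n-1), (1 - 1 / (1 + β * lam j) ^ 2) * (q j h) ^ 2
        = ∑ j ∈ Finset.range (n-2), (1 - 1 / (1 + β * lam (j+1)) ^ 2) * (q (j+1) h) ^ 2
          + (1 - 1 / (1 + β * lam 0) ^ 2) * (q 0 h) ^ 2 := by
      have : n - 1 = (n-2) + 1 := by omega
      rw [this, Finset.sum_range_succ']
    rw [hsplit]
    have hz : ∑ j ∈ Finset.range (n-2), (1 - 1 / (1 + β * lam (j+1)) ^ 2) * (q (j+1) h) ^ 2 = 0 := by
      apply Finset.sum_eq_zero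
      intro j hj
      have hjlt := Finset.mem_range.mp hj
      rw [hmid (j+1) (by omega) (by omega)]
      ring
    rw [hz, hlam0n', partc]
    ring
  exact ⟨parta, hlam0n', partc, partd⟩
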